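/- arXiv:1307.5561 — 5 statements merged into one kernel-verified Lean document; each statement's English description precedes it below -/
import Mathlib

section
/- Let a, b > 0 and constants σ₊, σ̃₋ > 0, m, M > 0 with m ≤ M. For μ > 1 define φ(μ) = min{ ((μ−1)σ̃₋²)/(μσ₊²), (m σ̃₋)/(√μ · M σ₊) }. Then φ is maximized over μ > 1 at the unique μ* > 1 where the two terms are equal, namely μ* = (1 + κ_G²/(2κ_f²) − (κ_G/(2κ_f))√(κ_G²/κ_f² + 4))⁻¹ with κ_f = M/m and κ_G = σ₊/σ̃₋, and the maximum value equals (1/(2κ_f))√(1/κ_f² + 4/κ_G²) − 1/(2κ_f²). -/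
/-- `φ(μ)`: the convergence constant after optimizing over the algorithm parameter `c`. -/
noncomputable def phi (σp σm m M μ : ℝ) : ℝ :=
  min ((μ - 1) * σm ^ 2 / (μ * σp ^ 2)) (m * σm / (Real.sqrt μ * M * σp))

set_option maxHeartbeats 1000000

theorem stmt_9 (σp σm m M : ℝ) (hσp : 0 < σp) (hσm : 0 < σm) (hm : 0 < m)
    (hM : 0 < M) (hmM : m ≤ M)
    (κf κG μstar : ℝ) (hκf : κf = M / m) (hκG : κG = σp / σm)
    (hμstar : μstar =
      (1 + κG ^ 2 / (2 * κf ^ 2) - κG / (2 * κf) * Real.sqrt (κG ^ 2 / κf ^ 2 + 4))⁻¹) :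
    1 < μstar ∧
    (μstar - 1) * σm ^ 2 / (μstar * σp ^ 2) = m * σm / (Real.sqrt μstar * M * σp) ∧
    (∀ μ : ℝ, 1 < μ →
      (μ - 1) * σm ^ 2 / (μ * σp ^ 2) = m * σm / (Real.sqrt μ * M * σp) → μ = μstar) ∧
    (∀ μ : ℝ, 1 < μ → phi σp σm m M μ ≤ phi σp σm m M μstar) ∧
    phi σp σm m M μstar =
      1 / (2 * κf) * Real.sqrt (1 / κf ^ 2 + 4 / κG ^ 2) - 1 / (2 * κf ^ 2) := by
  have hκf0 : 0 < κf := by rw [hκf]; positivity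
  have hκG0 : 0 < κG := by rw [hκG]; positivity
  obtain ⟨r, hr⟩ : ∃ r : ℝ, r = σp * m / (σm * M) := ⟨_, rfl⟩
  have hr0 : 0 < r := by rw [hr]; positivity
  obtain ⟨q, hq⟩ : ∃ q : ℝ, q = Real.sqrt (r ^ 2 + 4) := ⟨_, rfl⟩
  have hq0 : 0 ≤ q := hq ▸ Real.sqrt_nonneg _
  have hq2 : q ^ 2 = r ^ 2 + 4 := by rw [hq]; exact Real.sq_sqrt (by positivity)
  have hqr : r < q := by nlinarith
  have hq2' : 2 < q := by nlinarith
  have hrκ : r = κG / κf := by rw [hκG, hκf, hr]; field_simp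
  have hrm : r * (σm * M) = σp * m := by rw [hr]; field_simp
  have hqκ : Real.sqrt (κG ^ 2 / κf ^ 2 + 4) = q := by
    rw [hq]; congr 1
    rw [hrκ]; ring
  obtain ⟨s, hs⟩ : ∃ s : ℝ, s = (q + r) / 2 := ⟨_, rfl⟩
  have hs1 : 1 < s := by rw [hs]; linarith
  have hs0 : 0 < s := by linarith
  have hseq : s ^ 2 = 1 + r * s := by rw [hs]; linear_combination hq2 / 4
  have hμ : μstar = s ^ 2 := by
    rw [hμstar, hqκ]
    have h1 : 1 + κG ^ 2 / (2 * κf ^ 2) - κG / (2 * κf) * q = ((q - r) / 2) ^ 2 := by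
      have hκr2 : κG ^ 2 / (2 * κf ^ 2) = r ^ 2 / 2 := by rw [hrκ]; ring
      have hκr1 : κG / (2 * κf) = r / 2 := by rw [hrκ]; ring
      rw [hκr1, hκr2]; linear_combination (-1/4 : ℝ) * hq2
    rw [h1]
    have hmul : ((q - r) / 2) ^ 2 * s ^ 2 = 1 := by
      rw [hs]; linear_combination ((q ^ 2 - r ^ 2 + 4) / 16) * hq2
    exact inv_eq_of_mul_eq_one_right hmul
  have hsqrtμ : Real.sqrt μstar = s := by
    rw [hμ]; exact Real.sqrt_sq hs0.le
  have hμ1 : 1 < μstar := by rw [hμ]; nlinarith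
  have heqstar : (μstar - 1) * σm ^ 2 / (μstar * σp ^ 2) = m * σm / (Real.sqrt μstar * M * σp) := by
    rw [hsqrtμ, hμ]
    rw [div_eq_div_iff (by positivity) (by positivity)]
    linear_combination (σm ^ 2 * M * σp * s) * hseq + (s ^ 2 * σm * σp) * hrm
  refine ⟨hμ1, heqstar, ?_, ?_, ?_⟩
  · intro μ h1 heq
    obtain ⟨u, hu⟩ : ∃ u : ℝ, u = Real.sqrt μ := ⟨_, rfl⟩
    have hu2 : u ^ 2 = μ := by rw [hu]; exact Real.sq_sqrt (by linarith)
    have hu0 : 0 ≤ u := hu ▸ Real.sqrt_nonneg _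
    have hu1 : 1 < u := by nlinarith
    rw [← hu, ← hu2] at heq
    rw [div_eq_div_iff (by positivity) (by positivity)] at heq
    have key : (u ^ 2 - (1 + r * u)) * (u * σm ^ 2 * σp * M) = 0 := by
      linear_combination heq - u ^ 2 * σm * σp * hrm
    have hne : u * σm ^ 2 * σp * M ≠ 0 := by positivity
    have hue : u ^ 2 = 1 + r * u := by
      have := (mul_eq_zero.mp key).resolve_right hne
      linarith
    have hrs : r < s := by
      have h' : (s - r) * s = 1 := by linear_combination hseq
      nlinarith [h', hs0]
    have h0 : (u - s) * (u + s - r) = 0 := by linear_combination hue - hseq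
    have hus : u = s := by
      rcases mul_eq_zero.mp h0 with h | h
      · linarith
      · linarith
    rw [← hu2, hus, hμ]
  · intro μ h1
    have hval : phi σp σm m M μstar = m * σm / (s * M * σp) := by
      rw [phi, heqstar, min_self, hsqrtμ]
    rcases le_total μ μstar with hle | hle
    · calc phi σp σm m M μ ≤ (μ - 1) * σm ^ 2 / (μ * σp ^ 2) := min_le_left _ _
        _ ≤ (μstar - 1) * σm ^ 2 / (μstar * σp ^ 2) := by
            rw [div_le_div_iff₀ (by positivity) (by positivity)]
            nlinarith [mul_nonneg (mul_nonneg (sq_nonneg σm) (sq_nonneg σp))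
              (sub_nonneg.mpr hle)]
        _ = phi σp σm m M μstar := by rw [hval, heqstar, hsqrtμ]
    · have hsq : s ≤ Real.sqrt μ := by
        rw [← hsqrtμ]; exact Real.sqrt_le_sqrt hle
      have hsqpos : 0 < Real.sqrt μ := lt_of_lt_of_le hs0 hsq
      calc phi σp σm m M μ ≤ m * σm / (Real.sqrt μ * M * σp) := min_le_right _ _
        _ ≤ m * σm / (s * M * σp) := by
            apply div_le_div_of_nonneg_left (by positivity) (by positivity)
            nlinarith [mul_nonneg (mul_nonneg (sub_nonneg.mpr hsq) hM.le) hσp.le]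
        _ = phi σp σm m M μstar := hval.symm
  · have hval : phi σp σm m M μstar = m * σm / (s * M * σp) := by
      rw [phi, heqstar, min_self, hsqrtμ]
    have hsq5 : Real.sqrt (1 / κf ^ 2 + 4 / κG ^ 2) = q / κG := by
      have h5 : 1 / κf ^ 2 + 4 / κG ^ 2 = (q / κG) ^ 2 := by
        have hκr2 : 1 / κf ^ 2 = r ^ 2 / κG ^ 2 := by
          rw [hrκ]; field_simp
        rw [hκr2, div_pow, hq2]; ring
      rw [h5]; exact Real.sqrt_sq (by positivity)
    have hinv : (1 : ℝ) / s = (q - r) / 2 := by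
      rw [hs, div_eq_div_iff (by positivity) (by norm_num)]
      linear_combination (-1/2 : ℝ) * hq2
    have hsplit : m * σm / (s * M * σp) = (m * σm / (M * σp)) * (1 / s) := by ring
    rw [hval, hsq5, hsplit, hinv, hκf, hκG, hr]
    field_simp
end

section
/- Let f : R^n → R be differentiable and strongly convex with constant m > 0, i.e., ⟨∇f(a) − ∇f(b), a − b⟩ ≥ m‖a−b‖² for all a, b. Suppose x, x* ∈ R^n and vector equations ∇f(x) − ∇f(x*) = c M₊(z' − z) − M₋(β − β*), (c/2)M₋ᵀ(x − x*) = β − β', and (1/2)M₊ᵀ(x − x*) = z − z* hold for matrices M₊, M₋ and vectors z, z', z*, β, β', β* and c > 0. Then m‖x − x*‖² ≤ 2c⟨z' − z, z − z*⟩ + (2/c)⟨β' − β, β − β*⟩. -/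
open Matrix
open scoped RealInnerProductSpace

lemma adj_aux {n p : ℕ} (M : Matrix (Fin n) (Fin p) ℝ) (v : EuclideanSpace ℝ (Fin p))
    (w : EuclideanSpace ℝ (Fin n)) :
    ⟪(Matrix.toEuclideanLin M) v, w⟫ = ⟪v, (Matrix.toEuclideanLin Mᵀ) w⟫ := by
  rw [show (Mᵀ : Matrix (Fin p) (Fin n) ℝ) = Mᴴ from
      (Matrix.conjTranspose_eq_transpose_of_trivial M).symm,
    Matrix.toEuclideanLin_conjTranspose_eq_adjoint, LinearMap.adjoint_inner_right]

theorem stmt_14 (n p q : ℕ) (f : EuclideanSpace ℝ (Fin n) → ℝ)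
    (hdiff : Differentiable ℝ f) (m : ℝ) (hm : 0 < m)
    (hsc : ∀ a b : EuclideanSpace ℝ (Fin n),
      ⟪gradient f a - gradient f b, a - b⟫ ≥ m * ‖a - b‖ ^ 2)
    (Mp : Matrix (Fin n) (Fin p) ℝ) (Mm : Matrix (Fin n) (Fin q) ℝ)
    (x xstar : EuclideanSpace ℝ (Fin n))
    (z z' zstar : EuclideanSpace ℝ (Fin p))
    (β β' βstar : EuclideanSpace ℝ (Fin q))
    (c : ℝ) (hc : 0 < c)
    (h1 : gradient f x - gradient f xstar =
      c • (Matrix.toEuclideanLin Mp) (z' - z) - (Matrix.toEuclideanLin Mm) (β - βstar))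
    (h2 : (c / 2) • (Matrix.toEuclideanLin Mmᵀ) (x - xstar) = β - β')
    (h3 : (1 / 2 : ℝ) • (Matrix.toEuclideanLin Mpᵀ) (x - xstar) = z - zstar) :
    m * ‖x - xstar‖ ^ 2 ≤
      2 * c * ⟪z' - z, z - zstar⟫ + (2 / c) * ⟪β' - β, β - βstar⟫ := by
  have key := hsc x xstar
  rw [h1] at key
  have e1 : ⟪(Matrix.toEuclideanLin Mp) (z' - z), x - xstar⟫ = 2 * ⟪z' - z, z - zstar⟫ := by
    rw [adj_aux, ← h3, inner_smul_right]; ring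
  have e2 : ⟪(Matrix.toEuclideanLin Mm) (β - βstar), x - xstar⟫
      = -(2 / c) * ⟪β' - β, β - βstar⟫ := by
    have hv : (Matrix.toEuclideanLin Mmᵀ) (x - xstar)
        = (2 / c) • (β - β' : EuclideanSpace ℝ (Fin q)) := by
      rw [← h2, smul_smul]
      rw [show (2 / c) * (c / 2) = 1 by field_simp, one_smul]
    rw [adj_aux Mm (β - βstar) (x - xstar), hv, inner_smul_right,
      show (β' - β : EuclideanSpace ℝ (Fin q)) = -(β - β') by abel, inner_neg_left,
      real_inner_comm]
    ring
  rw [inner_sub_left, inner_smul_left, e1, e2] at key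
  simp only [RCLike.star_def, conj_trivial] at key
  nlinarith [key]
end

section
/- Let M₋ be a real matrix with smallest nonzero singular value σ̃₋ > 0 and let M₊ have largest singular value σ₊. Suppose β, β* both lie in the column space of M₋ᵀ, c > 0, μ > 1, g ∈ R^n with ‖g‖ ≤ M‖x − x*‖, and the equation g = cM₊(z' − z) − M₋(β − β*) holds. Then (1/c)‖β − β*‖² ≤ (cμσ₊²)/((μ−1)σ̃₋²)·‖z' − z‖² + (μM²)/(cσ̃₋²)·‖x − x*‖². -/
open Matrix

/-- The largest singular value of a real matrix `M`: the supremum of `‖M y‖`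
over vectors `y` in the closed unit ball. -/
noncomputable def sigmaMax {a b : ℕ} (M : Matrix (Fin a) (Fin b) ℝ) : ℝ :=
  sSup ((fun y => ‖Matrix.toEuclideanLin M y‖) '' {y : EuclideanSpace ℝ (Fin b) | ‖y‖ ≤ 1})

/-- The smallest nonzero singular value of a real matrix `M`: the infimum of `‖M y‖`
over unit vectors `y` in the column space of `Mᵀ`. -/
noncomputable def sigmaMinPos {a b : ℕ} (M : Matrix (Fin a) (Fin b) ℝ) : ℝ :=
  sInf ((fun y => ‖Matrix.toEuclideanLin M y‖) ''
    {y : EuclideanSpace ℝ (Fin b) | ‖y‖ = 1 ∧ y ∈ LinearMap.range (Matrix.toEuclideanLin Mᵀ)})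

lemma bddAbove_sigmaSet {a b : ℕ} (M : Matrix (Fin a) (Fin b) ℝ) :
    BddAbove ((fun y => ‖Matrix.toEuclideanLin M y‖) '' {y : EuclideanSpace ℝ (Fin b) | ‖y‖ ≤ 1}) := by
  refine ⟨‖LinearMap.toContinuousLinearMap (Matrix.toEuclideanLin M)‖, ?_⟩
  rintro r ⟨y, hy, rfl⟩
  calc ‖Matrix.toEuclideanLin M y‖
      = ‖LinearMap.toContinuousLinearMap (Matrix.toEuclideanLin M) y‖ := rfl
    _ ≤ ‖LinearMap.toContinuousLinearMap (Matrix.toEuclideanLin M)‖ * ‖y‖ :=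
        (LinearMap.toContinuousLinearMap (Matrix.toEuclideanLin M)).le_opNorm y
    _ ≤ ‖LinearMap.toContinuousLinearMap (Matrix.toEuclideanLin M)‖ * 1 := by
        exact mul_le_mul_of_nonneg_left hy (norm_nonneg _)
    _ = _ := mul_one _

lemma sigmaMax_bound {a b : ℕ} (M : Matrix (Fin a) (Fin b) ℝ)
    (w : EuclideanSpace ℝ (Fin b)) :
    ‖Matrix.toEuclideanLin M w‖ ≤ sigmaMax M * ‖w‖ := by
  rcases eq_or_ne w 0 with rfl | hw
  · simp
  · have hw' : (0:ℝ) < ‖w‖ := norm_pos_iff.mpr hw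
    have hmem : ‖w‖⁻¹ • w ∈ {y : EuclideanSpace ℝ (Fin b) | ‖y‖ ≤ 1} := by
      simp [norm_smul, abs_of_pos (inv_pos.mpr hw'), inv_mul_cancel₀ hw'.ne']
    have h := le_csSup (bddAbove_sigmaSet M) (Set.mem_image_of_mem _ hmem)
    have heval : ‖Matrix.toEuclideanLin M (‖w‖⁻¹ • w)‖ = ‖w‖⁻¹ * ‖Matrix.toEuclideanLin M w‖ := by
      rw [LinearMap.map_smul, norm_smul]
      simp [abs_of_pos (inv_pos.mpr hw')]
    rw [heval] at h
    calc ‖Matrix.toEuclideanLin M w‖ = (‖w‖⁻¹ * ‖Matrix.toEuclideanLin M w‖) * ‖w‖ := by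
          field_simp
      _ ≤ sigmaMax M * ‖w‖ := by
          exact mul_le_mul_of_nonneg_right h hw'.le

lemma sigmaMinPos_bound {a b : ℕ} (M : Matrix (Fin a) (Fin b) ℝ)
    (v : EuclideanSpace ℝ (Fin b)) (hv : v ∈ LinearMap.range (Matrix.toEuclideanLin Mᵀ)) :
    sigmaMinPos M * ‖v‖ ≤ ‖Matrix.toEuclideanLin M v‖ := by
  rcases eq_or_ne v 0 with rfl | hv0
  · simp
  · have hv' : (0:ℝ) < ‖v‖ := norm_pos_iff.mpr hv0
    have hmem : ‖v‖⁻¹ • v ∈ {y : EuclideanSpace ℝ (Fin b) | ‖y‖ = 1 ∧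
        y ∈ LinearMap.range (Matrix.toEuclideanLin Mᵀ)} := by
      constructor
      · simp [norm_smul, abs_of_pos (inv_pos.mpr hv'), inv_mul_cancel₀ hv'.ne']
      · exact Submodule.smul_mem _ _ hv
    have hbdd : BddBelow ((fun y => ‖Matrix.toEuclideanLin M y‖) ''
        {y : EuclideanSpace ℝ (Fin b) | ‖y‖ = 1 ∧
          y ∈ LinearMap.range (Matrix.toEuclideanLin Mᵀ)}) := by
      refine ⟨0, ?_⟩
      rintro r ⟨y, hy, rfl⟩
      exact norm_nonneg _
    have h := csInf_le hbdd (Set.mem_image_of_mem _ hmem)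
    have heval : ‖Matrix.toEuclideanLin M (‖v‖⁻¹ • v)‖ = ‖v‖⁻¹ * ‖Matrix.toEuclideanLin M v‖ := by
      rw [LinearMap.map_smul, norm_smul]
      simp [abs_of_pos (inv_pos.mpr hv')]
    rw [heval] at h
    calc sigmaMinPos M * ‖v‖ ≤ (‖v‖⁻¹ * ‖Matrix.toEuclideanLin M v‖) * ‖v‖ :=
          mul_le_mul_of_nonneg_right h hv'.le
      _ = ‖Matrix.toEuclideanLin M v‖ := by field_simp

lemma young_sq {E : Type*} [NormedAddCommGroup E] (a b : E) {t : ℝ} (ht : 0 < t) :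
    ‖a - b‖ ^ 2 ≤ (1 + t) * ‖a‖ ^ 2 + (1 + t⁻¹) * ‖b‖ ^ 2 := by
  have h1 : ‖a - b‖ ≤ ‖a‖ + ‖b‖ := norm_sub_le a b
  have ht' : (0:ℝ) < t⁻¹ := inv_pos.mpr ht
  have hti : t * t⁻¹ = 1 := mul_inv_cancel₀ ht.ne'
  have h2 : ‖a - b‖ ^ 2 ≤ (‖a‖ + ‖b‖) ^ 2 := pow_le_pow_left₀ (norm_nonneg _) h1 2
  nlinarith [norm_nonneg a, norm_nonneg b, h2,
    mul_nonneg ht'.le (sq_nonneg (t * ‖a‖ - ‖b‖))]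

theorem stmt_16 (n p q : ℕ) (Mp : Matrix (Fin n) (Fin p) ℝ) (Mm : Matrix (Fin n) (Fin q) ℝ)
    (hσm : 0 < sigmaMinPos Mm)
    (β βstar : EuclideanSpace ℝ (Fin q))
    (hβ : β ∈ LinearMap.range (Matrix.toEuclideanLin Mmᵀ))
    (hβstar : βstar ∈ LinearMap.range (Matrix.toEuclideanLin Mmᵀ))
    (c μ M : ℝ) (hc : 0 < c) (hμ : 1 < μ) (hM : 0 < M)
    (x xstar : EuclideanSpace ℝ (Fin n)) (z z' : EuclideanSpace ℝ (Fin p))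
    (g : EuclideanSpace ℝ (Fin n)) (hg : ‖g‖ ≤ M * ‖x - xstar‖)
    (heq : g = c • (Matrix.toEuclideanLin Mp) (z' - z) - (Matrix.toEuclideanLin Mm) (β - βstar)) :
    (1 / c) * ‖β - βstar‖ ^ 2 ≤
      c * μ * sigmaMax Mp ^ 2 / ((μ - 1) * sigmaMinPos Mm ^ 2) * ‖z' - z‖ ^ 2 +
      μ * M ^ 2 / (c * sigmaMinPos Mm ^ 2) * ‖x - xstar‖ ^ 2 := by
  set v := β - βstar
  set w := z' - z
  have hvmem : v ∈ LinearMap.range (Matrix.toEuclideanLin Mmᵀ) :=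
    Submodule.sub_mem _ hβ hβstar
  have h1 : sigmaMinPos Mm * ‖v‖ ≤ ‖Matrix.toEuclideanLin Mm v‖ :=
    sigmaMinPos_bound Mm v hvmem
  have h2 : ‖Matrix.toEuclideanLin Mp w‖ ≤ sigmaMax Mp * ‖w‖ := sigmaMax_bound Mp w
  have hMmv : Matrix.toEuclideanLin Mm v = c • Matrix.toEuclideanLin Mp w - g := by
    rw [heq]; abel
  have ht : (0:ℝ) < (μ - 1)⁻¹ := inv_pos.mpr (by linarith)
  have h3 : ‖Matrix.toEuclideanLin Mm v‖ ^ 2 ≤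
      (μ / (μ - 1)) * ‖c • Matrix.toEuclideanLin Mp w‖ ^ 2 + μ * ‖g‖ ^ 2 := by
    rw [hMmv]
    have := young_sq (c • Matrix.toEuclideanLin Mp w) g ht
    have hne : μ - 1 ≠ 0 := by linarith
    have e1 : (1 + (μ - 1)⁻¹) = μ / (μ - 1) := by field_simp; ring
    have e2 : (1 + ((μ - 1)⁻¹)⁻¹) = μ := by
      rw [inv_inv]; ring
    rw [e1, e2] at this
    exact this
  have hcw : ‖c • Matrix.toEuclideanLin Mp w‖ = c * ‖Matrix.toEuclideanLin Mp w‖ := by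
    rw [norm_smul]; simp [abs_of_pos hc]
  have hσp : 0 ≤ sigmaMax Mp := by
    have h0 : (0:ℝ) ∈ ((fun y => ‖Matrix.toEuclideanLin Mp y‖) ''
        {y : EuclideanSpace ℝ (Fin p) | ‖y‖ ≤ 1}) := by
      refine ⟨0, by simp, by simp⟩
    have := le_csSup (bddAbove_sigmaSet Mp) h0
    simpa [sigmaMax] using this
  -- combine
  have hkey : sigmaMinPos Mm ^ 2 * ‖v‖ ^ 2 ≤
      (μ / (μ - 1)) * c ^ 2 * (sigmaMax Mp * ‖w‖) ^ 2 + μ * (M * ‖x - xstar‖) ^ 2 := by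
    have hA : (sigmaMinPos Mm * ‖v‖) ^ 2 ≤ ‖Matrix.toEuclideanLin Mm v‖ ^ 2 :=
      pow_le_pow_left₀ (mul_nonneg hσm.le (norm_nonneg _)) h1 2
    have hB : ‖c • Matrix.toEuclideanLin Mp w‖ ^ 2 ≤ c ^ 2 * (sigmaMax Mp * ‖w‖) ^ 2 := by
      rw [hcw, mul_pow]
      exact mul_le_mul_of_nonneg_left (pow_le_pow_left₀ (norm_nonneg _) h2 2) (sq_nonneg c)
    have hC : ‖g‖ ^ 2 ≤ (M * ‖x - xstar‖) ^ 2 :=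
      pow_le_pow_left₀ (norm_nonneg g) hg 2
    have hμpos : 0 < μ := by linarith
    have hfrac : 0 < μ / (μ - 1) := div_pos hμpos (by linarith)
    nlinarith [mul_le_mul_of_nonneg_left hB hfrac.le, mul_le_mul_of_nonneg_left hC hμpos.le]
  -- now divide
  have hs2 : (0:ℝ) < sigmaMinPos Mm ^ 2 := pow_pos hσm 2
  have hμ1 : (0:ℝ) < μ - 1 := by linarith
  have key2 := (div_le_div_iff_of_pos_right (by positivity : (0:ℝ) < c * sigmaMinPos Mm ^ 2)).mpr hkey
  have eL : sigmaMinPos Mm ^ 2 * ‖v‖ ^ 2 / (c * sigmaMinPos Mm ^ 2) = (1 / c) * ‖v‖ ^ 2 := by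
    field_simp
  have eR : ((μ / (μ - 1)) * c ^ 2 * (sigmaMax Mp * ‖w‖) ^ 2 + μ * (M * ‖x - xstar‖) ^ 2) /
      (c * sigmaMinPos Mm ^ 2) =
      c * μ * sigmaMax Mp ^ 2 / ((μ - 1) * sigmaMinPos Mm ^ 2) * ‖w‖ ^ 2 +
      μ * M ^ 2 / (c * sigmaMinPos Mm ^ 2) * ‖x - xstar‖ ^ 2 := by
    field_simp
  rw [eL, eR] at key2
  exact key2
end

section
/- With the ADMM iteration for decentralized consensus: ∇f(x^{k+1}) + M₋β^{k+1} − cM₊(z^k − z^{k+1}) = 0, β^{k+1} = β^k + (c/2)M₋ᵀx^{k+1}, z^k = (1/2)M₊ᵀx^k for all k, defining α^k = M₋β^k, L₊ = (1/2)M₊M₊ᵀ, L₋ = (1/2)M₋M₋ᵀ, and W = (1/2)(L₊ + L₋), the iteration is equivalent to: ∇f(x^{k+1}) + α^k + 2cWx^{k+1} − cL₊x^k = 0 and α^{k+1} = α^k + cL₋x^{k+1}. -/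
open Matrix

theorem stmt_18 (n p : ℕ) (f : EuclideanSpace ℝ (Fin n) → ℝ) (hdiff : Differentiable ℝ f)
    (Mp Mm : Matrix (Fin n) (Fin p) ℝ) (c : ℝ) (hc : 0 < c)
    (x : ℕ → EuclideanSpace ℝ (Fin n))
    (z β : ℕ → EuclideanSpace ℝ (Fin p))
    -- the ADMM iteration
    (h1 : ∀ k, gradient f (x (k + 1)) + (Matrix.toEuclideanLin Mm) (β (k + 1)) -
      c • (Matrix.toEuclideanLin Mp) (z k - z (k + 1)) = 0)
    (h2 : ∀ k, β (k + 1) = β k + (c / 2) • (Matrix.toEuclideanLin Mmᵀ) (x (k + 1)))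
    (h3 : ∀ k, z k = (1 / 2 : ℝ) • (Matrix.toEuclideanLin Mpᵀ) (x k))
    -- the new multiplier and the Laplacian / degree matrices
    (α : ℕ → EuclideanSpace ℝ (Fin n)) (hα : ∀ k, α k = (Matrix.toEuclideanLin Mm) (β k))
    (Lp Lm W : Matrix (Fin n) (Fin n) ℝ)
    (hLp : Lp = (1 / 2 : ℝ) • (Mp * Mpᵀ)) (hLm : Lm = (1 / 2 : ℝ) • (Mm * Mmᵀ))
    (hW : W = (1 / 2 : ℝ) • (Lp + Lm)) :
    (∀ k, gradient f (x (k + 1)) + α k + (2 * c) • (Matrix.toEuclideanLin W) (x (k + 1)) -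
      c • (Matrix.toEuclideanLin Lp) (x k) = 0) ∧
    (∀ k, α (k + 1) = α k + c • (Matrix.toEuclideanLin Lm) (x (k + 1))) := by
  have key : ∀ (A : Matrix (Fin n) (Fin p) ℝ) (B : Matrix (Fin p) (Fin n) ℝ)
      (v : EuclideanSpace ℝ (Fin n)),
      Matrix.toEuclideanLin (A * B) v = Matrix.toEuclideanLin A (Matrix.toEuclideanLin B v) := by
    intro A B v
    rw [Matrix.toEuclideanLin_eq_toLin, Matrix.toLin_mul _ (PiLp.basisFun 2 ℝ (Fin p)) _]
    rfl
  constructor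
  · intro k
    have h1k := h1 k
    rw [h2 k, h3 k, h3 (k + 1)] at h1k
    simp only [map_add, map_sub, _root_.map_smul, key] at h1k
    simp only [hα, hW, hLp, hLm, map_add, _root_.map_smul, LinearMap.add_apply,
      LinearMap.smul_apply, key]
    linear_combination (norm := module) h1k
  · intro k
    rw [hα, hα, h2 k, hLm]
    simp only [map_add, _root_.map_smul, key, LinearMap.add_apply, LinearMap.smul_apply]
    module
end

section
/- Under the hypotheses of the main theorem (f strongly convex with constant m_f and M_f-Lipschitz gradient; β^0 and β* in the column space of M₋ᵀ; ADMM updates as stated; u = (z; β), G = diag(cI, (1/c)I)), for any μ > 1, with δ = min{ ((μ−1)σ̃_min²(M₋))/(μσ_max²(M₊)), m_f / ( (c/4)σ_max²(M₊) + (μ/c)M_f²/σ̃_min²(M₋) ) } > 0, the iterates satisfy ‖u^{k+1} − u*‖_G² ≤ (1/(1+δ))‖u^k − u*‖_G² for all k. -/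
open Matrix
open scoped RealInnerProductSpace

-- continuous linear map version
noncomputable def Tc {a b : ℕ} (M : Matrix (Fin a) (Fin b) ℝ) :
    EuclideanSpace ℝ (Fin b) →L[ℝ] EuclideanSpace ℝ (Fin a) :=
  LinearMap.toContinuousLinearMap (Matrix.toEuclideanLin M)

lemma sigmaMax_eq_opNorm {a b : ℕ} (M : Matrix (Fin a) (Fin b) ℝ) :
    sigmaMax M = ‖Tc M‖ := by
  rw [← (Tc M).sSup_unitClosedBall_eq_norm]
  unfold sigmaMax
  congr 1
  apply Set.ext
  intro r
  constructor
  · rintro ⟨y, hy, rfl⟩; exact ⟨y, Metric.mem_closedBall.2 (by simpa using hy), rfl⟩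
  · rintro ⟨y, hy, rfl⟩; exact ⟨y, by simpa using Metric.mem_closedBall.1 hy, rfl⟩

lemma norm_le_sigmaMax {a b : ℕ} (M : Matrix (Fin a) (Fin b) ℝ)
    (y : EuclideanSpace ℝ (Fin b)) :
    ‖Matrix.toEuclideanLin M y‖ ≤ sigmaMax M * ‖y‖ := by
  rw [sigmaMax_eq_opNorm]
  exact (Tc M).le_opNorm y

lemma sigmaMax_pos {a b : ℕ} (M : Matrix (Fin a) (Fin b) ℝ) (hM : M ≠ 0) :
    0 < sigmaMax M := by
  rw [sigmaMax_eq_opNorm]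
  have : Tc M ≠ 0 := by
    intro h
    apply hM
    have : Matrix.toEuclideanLin M = 0 := by
      ext y : 1
      exact congrFun (congrArg DFunLike.coe h) y
    simpa using congrArg Matrix.toEuclideanLin.symm this
  exact norm_pos_iff.2 this

lemma inner_toEuclideanLin {a b : ℕ} (M : Matrix (Fin a) (Fin b) ℝ)
    (v : EuclideanSpace ℝ (Fin b)) (w : EuclideanSpace ℝ (Fin a)) :
    ⟪Matrix.toEuclideanLin M v, w⟫ = ⟪v, Matrix.toEuclideanLin Mᵀ w⟫ := by
  rw [show Mᵀ = Mᴴ from (Matrix.conjTranspose_eq_transpose_of_trivial M).symm,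
    Matrix.toEuclideanLin_conjTranspose_eq_adjoint]
  exact (LinearMap.adjoint_inner_right _ _ _).symm

lemma sigmaMinPos_mul_le {a b : ℕ} (M : Matrix (Fin a) (Fin b) ℝ)
    (y : EuclideanSpace ℝ (Fin b))
    (hy : y ∈ LinearMap.range (Matrix.toEuclideanLin Mᵀ)) :
    sigmaMinPos M * ‖y‖ ≤ ‖Matrix.toEuclideanLin M y‖ := by
  rcases eq_or_ne y 0 with rfl | hy0
  · simp
  · have hny : (0:ℝ) < ‖y‖ := norm_pos_iff.2 hy0
    set u : EuclideanSpace ℝ (Fin b) := ‖y‖⁻¹ • y with hu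
    have hun : ‖u‖ = 1 := by
      rw [hu, norm_smul]; simp [abs_of_pos hny]; field_simp
    have hur : u ∈ LinearMap.range (Matrix.toEuclideanLin Mᵀ) :=
      Submodule.smul_mem _ _ hy
    have hle : sigmaMinPos M ≤ ‖Matrix.toEuclideanLin M u‖ := by
      apply csInf_le
      · exact ⟨0, by rintro r ⟨v, hv, rfl⟩; positivity⟩
      · exact ⟨u, ⟨hun, hur⟩, rfl⟩
    have : ‖Matrix.toEuclideanLin M u‖ = ‖y‖⁻¹ * ‖Matrix.toEuclideanLin M y‖ := by
      rw [hu, _root_.map_smul, norm_smul]; simp [abs_of_pos hny]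
    rw [this] at hle
    have := mul_le_mul_of_nonneg_right hle (le_of_lt hny)
    calc sigmaMinPos M * ‖y‖ ≤ ‖y‖⁻¹ * ‖Matrix.toEuclideanLin M y‖ * ‖y‖ := this
      _ = ‖Matrix.toEuclideanLin M y‖ := by field_simp

lemma sigmaMinPos_pos {a b : ℕ} (M : Matrix (Fin a) (Fin b) ℝ) (hM : M ≠ 0) :
    0 < sigmaMinPos M := by
  set S : Set (EuclideanSpace ℝ (Fin b)) :=
    {y | ‖y‖ = 1 ∧ y ∈ LinearMap.range (Matrix.toEuclideanLin Mᵀ)} with hS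
  have hcomp : IsCompact S := by
    have h1 : S = Metric.sphere (0 : EuclideanSpace ℝ (Fin b)) 1 ∩
        (LinearMap.range (Matrix.toEuclideanLin Mᵀ) : Set (EuclideanSpace ℝ (Fin b))) := by
      ext y; simp [hS, mem_sphere_zero_iff_norm, Set.mem_setOf_eq, SetLike.mem_coe]
    rw [h1]
    exact (isCompact_sphere _ _).inter_right
      (Submodule.closed_of_finiteDimensional _)
  have hne : S.Nonempty := by
    have hMt : Matrix.toEuclideanLin Mᵀ ≠ 0 := by
      intro h
      apply hM
      have : Mᵀ = 0 := by simpa using congrArg Matrix.toEuclideanLin.symm h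
      simpa using congrArg Matrix.transpose this
    obtain ⟨v, hv⟩ : ∃ v, Matrix.toEuclideanLin Mᵀ v ≠ 0 := by
      by_contra h
      push_neg at h
      exact hMt (LinearMap.ext fun v => h v)
    set w := Matrix.toEuclideanLin Mᵀ v with hw
    have hnw : (0:ℝ) < ‖w‖ := norm_pos_iff.2 hv
    refine ⟨‖w‖⁻¹ • w, ?_, Submodule.smul_mem _ _ ⟨v, rfl⟩⟩
    rw [norm_smul]; simp [abs_of_pos hnw]; field_simp
  obtain ⟨y, hyS, hval⟩ := hcomp.exists_sInf_image_eq hne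
    (((Tc M).continuous.norm).continuousOn)
  have hMy : Matrix.toEuclideanLin M y ≠ 0 := by
    obtain ⟨hy1, v, hv⟩ := hyS
    intro h0
    have : ‖y‖ ^ 2 = 0 := by
      have : ⟪y, y⟫ = (0:ℝ) := by
        calc ⟪y, y⟫ = ⟪Matrix.toEuclideanLin Mᵀ v, y⟫ := by rw [hv]
          _ = ⟪Matrix.toEuclideanLin M y, v⟫ := by
              rw [real_inner_comm]
              exact (inner_toEuclideanLin M y v).symm
          _ = 0 := by rw [h0]; simp
      rw [← real_inner_self_eq_norm_sq, this]
    simp [hy1] at this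
  have : sigmaMinPos M = ‖Matrix.toEuclideanLin M y‖ := hval
  rw [this]
  exact norm_pos_iff.2 hMy

lemma sigmaMax_transpose_le {a b : ℕ} (M : Matrix (Fin a) (Fin b) ℝ)
    (v : EuclideanSpace ℝ (Fin a)) :
    ‖Matrix.toEuclideanLin Mᵀ v‖ ≤ sigmaMax M * ‖v‖ := by
  set w := Matrix.toEuclideanLin Mᵀ v with hw
  rcases eq_or_lt_of_le (norm_nonneg w) with h0 | h0
  · rw [← h0]
    have : (0:ℝ) ≤ sigmaMax M := by
      rw [sigmaMax_eq_opNorm]; exact norm_nonneg _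
    positivity
  · have key : ‖w‖ * ‖w‖ ≤ sigmaMax M * ‖v‖ * ‖w‖ := by
      calc ‖w‖ * ‖w‖ = ⟪w, w⟫ := (real_inner_self_eq_norm_mul_norm w).symm
        _ = ⟪Matrix.toEuclideanLin M w, v⟫ := by
              rw [hw]; exact (inner_toEuclideanLin M _ v).symm
        _ ≤ ‖Matrix.toEuclideanLin M w‖ * ‖v‖ := real_inner_le_norm _ _
        _ ≤ (sigmaMax M * ‖w‖) * ‖v‖ :=
            mul_le_mul_of_nonneg_right (norm_le_sigmaMax M w) (norm_nonneg v)
        _ = sigmaMax M * ‖v‖ * ‖w‖ := by ring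
    exact le_of_mul_le_mul_right key h0

set_option maxHeartbeats 1000000 in
theorem stmt_19 (n p : ℕ) (f : EuclideanSpace ℝ (Fin n) → ℝ) (hdiff : Differentiable ℝ f)
    (Mp Mm : Matrix (Fin n) (Fin p) ℝ) (hMp : Mp ≠ 0) (hMm : Mm ≠ 0)
    (mf Mf : ℝ) (hmf : 0 < mf) (hMf : 0 < Mf)
    -- strong convexity and Lipschitz continuity of the gradient
    (hsc : ∀ a b : EuclideanSpace ℝ (Fin n),
      ⟪gradient f a - gradient f b, a - b⟫ ≥ mf * ‖a - b‖ ^ 2)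
    (hlip : ∀ a b : EuclideanSpace ℝ (Fin n),
      ‖gradient f a - gradient f b‖ ≤ Mf * ‖a - b‖)
    (c μ : ℝ) (hc : 0 < c) (hμ : 1 < μ)
    -- the KKT point
    (xstar : EuclideanSpace ℝ (Fin n)) (zstar βstar : EuclideanSpace ℝ (Fin p))
    (hKKT1 : gradient f xstar + (Matrix.toEuclideanLin Mm) βstar = 0)
    (hKKT2 : (Matrix.toEuclideanLin Mmᵀ) xstar = 0)
    (hKKT3 : (1 / 2 : ℝ) • (Matrix.toEuclideanLin Mpᵀ) xstar = zstar)
    (hβstar : βstar ∈ LinearMap.range (Matrix.toEuclideanLin Mmᵀ))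
    -- the ADMM iterates
    (x : ℕ → EuclideanSpace ℝ (Fin n)) (z β : ℕ → EuclideanSpace ℝ (Fin p))
    (hβ0 : β 0 ∈ LinearMap.range (Matrix.toEuclideanLin Mmᵀ))
    (h1 : ∀ k, gradient f (x (k + 1)) + (Matrix.toEuclideanLin Mm) (β (k + 1)) -
      c • (Matrix.toEuclideanLin Mp) (z k - z (k + 1)) = 0)
    (h2 : ∀ k, β (k + 1) - β k = (c / 2) • (Matrix.toEuclideanLin Mmᵀ) (x (k + 1)))
    (h3 : ∀ k, z k = (1 / 2 : ℝ) • (Matrix.toEuclideanLin Mpᵀ) (x k))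
    -- the linear rate constant
    (δ : ℝ)
    (hδ : δ = min ((μ - 1) * sigmaMinPos Mm ^ 2 / (μ * sigmaMax Mp ^ 2))
      (mf / (c / 4 * sigmaMax Mp ^ 2 + μ / c * Mf ^ 2 / sigmaMinPos Mm ^ 2))) :
    0 < δ ∧
    ∀ k, c * ‖z (k + 1) - zstar‖ ^ 2 + (1 / c) * ‖β (k + 1) - βstar‖ ^ 2 ≤
      1 / (1 + δ) * (c * ‖z k - zstar‖ ^ 2 + (1 / c) * ‖β k - βstar‖ ^ 2) := by
  have hsp : 0 < sigmaMax Mp := sigmaMax_pos Mp hMp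
  have hsm : 0 < sigmaMinPos Mm := sigmaMinPos_pos Mm hMm
  set sp := sigmaMax Mp with hspdef
  set sm := sigmaMinPos Mm with hsmdef
  have hμ1 : (0:ℝ) < μ - 1 := by linarith
  have hμ0 : (0:ℝ) < μ := by linarith
  have hD : (0:ℝ) < c / 4 * sp ^ 2 + μ / c * Mf ^ 2 / sm ^ 2 := by positivity
  have hδpos : 0 < δ := by
    rw [hδ]
    exact lt_min (by positivity) (by positivity)
  refine ⟨hδpos, fun k => ?_⟩
  -- range membership of β k - βstar
  have hrange : ∀ j, β j - βstar ∈ LinearMap.range (Matrix.toEuclideanLin Mmᵀ) := by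
    intro j
    induction j with
    | zero => exact sub_mem hβ0 hβstar
    | succ j ih =>
      have hsplit : β (j+1) - βstar = (β (j+1) - β j) + (β j - βstar) := by abel
      rw [hsplit]
      refine add_mem ?_ ih
      rw [h2 j]
      exact Submodule.smul_mem _ _ ⟨x (j+1), rfl⟩
  set xd := x (k+1) - xstar with hxd
  set zd := z k - z (k+1) with hzd
  set ze := z (k+1) - zstar with hze
  set βd := β (k+1) - β k with hβd
  set βe := β (k+1) - βstar with hβe
  set gd := gradient f (x (k+1)) - gradient f xstar with hgd
  -- key equations
  have E1 : gd = c • (Matrix.toEuclideanLin Mp) zd - (Matrix.toEuclideanLin Mm) βe := by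
    have key : gd + (Matrix.toEuclideanLin Mm) βe - c • (Matrix.toEuclideanLin Mp) zd =
        (gradient f (x (k+1)) + (Matrix.toEuclideanLin Mm) (β (k+1)) -
          c • (Matrix.toEuclideanLin Mp) (z k - z (k+1))) -
        (gradient f xstar + (Matrix.toEuclideanLin Mm) βstar) := by
      rw [hgd, hβe, hzd, map_sub]
      abel
    rw [h1 k, hKKT1, sub_zero] at key
    exact eq_sub_of_add_eq (sub_eq_zero.mp key)
  have E2 : βd = (c/2) • (Matrix.toEuclideanLin Mmᵀ) xd := by
    rw [hxd, map_sub, hKKT2, sub_zero]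
    exact h2 k
  have hPt : (Matrix.toEuclideanLin Mpᵀ) xd = (2:ℝ) • ze := by
    have hzee : ze = (1/2:ℝ) • (Matrix.toEuclideanLin Mpᵀ) xd := by
      rw [hze, hxd, map_sub, h3 (k+1), ← hKKT3, smul_sub]
    rw [hzee, smul_smul]
    norm_num
  have hAt : c • (Matrix.toEuclideanLin Mmᵀ) xd = (2:ℝ) • βd := by
    rw [E2, smul_smul]
    congr 1
    ring
  have hTβe : (Matrix.toEuclideanLin Mm) βe = c • (Matrix.toEuclideanLin Mp) zd - gd := by
    rw [E1]; abel
  -- inner product identity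
  have S1 : c * ⟪gd, xd⟫ = 2*c^2*⟪zd, ze⟫ - 2*⟪βe, βd⟫ := by
    have e1 : ⟪gd, xd⟫ = c * ⟪zd, (Matrix.toEuclideanLin Mpᵀ) xd⟫ -
        ⟪βe, (Matrix.toEuclideanLin Mmᵀ) xd⟫ := by
      rw [E1, inner_sub_left, real_inner_smul_left, inner_toEuclideanLin, inner_toEuclideanLin]
    have e2 : ⟪zd, (Matrix.toEuclideanLin Mpᵀ) xd⟫ = 2 * ⟪zd, ze⟫ := by
      rw [hPt, real_inner_smul_right]
    have e3 : c * ⟪βe, (Matrix.toEuclideanLin Mmᵀ) xd⟫ = 2 * ⟪βe, βd⟫ := by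
      rw [← real_inner_smul_right, hAt, real_inner_smul_right]
    linear_combination c * e1 + c^2 * e2 - e3
  -- strong convexity
  have S2 : mf * ‖xd‖^2 ≤ ⟪gd, xd⟫ := hsc (x (k+1)) xstar
  -- norm expansions
  have I1 : ‖z k - zstar‖^2 = ‖zd‖^2 + 2*⟪zd, ze⟫ + ‖ze‖^2 := by
    have hzz : z k - zstar = zd + ze := by rw [hzd, hze]; abel
    rw [hzz]
    exact norm_add_sq_real zd ze
  have I2 : ‖β k - βstar‖^2 = ‖βe‖^2 - 2*⟪βe, βd⟫ + ‖βd‖^2 := by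
    have hbb : β k - βstar = βe - βd := by rw [hβd, hβe]; abel
    rw [hbb]
    exact norm_sub_sq_real βe βd
  -- the descent inequality (times c)
  have Eq1 : c * ⟪gd, xd⟫ = c^2*(‖z k - zstar‖^2 - ‖zd‖^2 - ‖ze‖^2) +
      (‖β k - βstar‖^2 - ‖βd‖^2 - ‖βe‖^2) := by
    linear_combination S1 - c^2 * I1 - I2
  have D1 : mf*c*‖xd‖^2 + c^2*‖zd‖^2 + ‖βd‖^2 + c^2*‖ze‖^2 + ‖βe‖^2 ≤
      c^2*‖z k - zstar‖^2 + ‖β k - βstar‖^2 := by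
    have hq := mul_le_mul_of_nonneg_left S2 hc.le
    linarith [Eq1, hq]
  -- norm bounds
  have B1 : 2*‖ze‖ ≤ sp*‖xd‖ := by
    have := sigmaMax_transpose_le Mp xd
    rw [hPt, norm_smul] at this
    simpa using this
  have Bz : ‖(Matrix.toEuclideanLin Mp) zd‖ ≤ sp*‖zd‖ := norm_le_sigmaMax Mp zd
  have Bg : ‖gd‖ ≤ Mf*‖xd‖ := hlip (x (k+1)) xstar
  have Bn : ‖(Matrix.toEuclideanLin Mm) βe‖ ≤ c*(sp*‖zd‖) + Mf*‖xd‖ := by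
    rw [hTβe]
    calc ‖c • (Matrix.toEuclideanLin Mp) zd - gd‖ ≤
        ‖c • (Matrix.toEuclideanLin Mp) zd‖ + ‖gd‖ := norm_sub_le _ _
      _ = c * ‖(Matrix.toEuclideanLin Mp) zd‖ + ‖gd‖ := by
          rw [norm_smul, Real.norm_eq_abs, abs_of_pos hc]
      _ ≤ c*(sp*‖zd‖) + Mf*‖xd‖ := by
          have := mul_le_mul_of_nonneg_left Bz hc.le
          linarith
  have Bsm : sm*‖βe‖ ≤ ‖(Matrix.toEuclideanLin Mm) βe‖ :=
    sigmaMinPos_mul_le Mm βe (hβe ▸ hrange (k+1))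
  have a3 : (μ-1)*(sm*‖βe‖)^2 ≤ μ*(c*sp*‖zd‖)^2 + (μ-1)*μ*(Mf*‖xd‖)^2 := by
    have hsq : (sm*‖βe‖)^2 ≤ (c*(sp*‖zd‖) + Mf*‖xd‖)^2 := by
      apply pow_le_pow_left₀ (by positivity)
      linarith [Bsm, Bn]
    have hmul := mul_le_mul_of_nonneg_left hsq hμ1.le
    nlinarith [sq_nonneg (c*sp*‖zd‖ - (μ-1)*(Mf*‖xd‖))]
  have a4 : δ*(μ*sp^2) ≤ (μ-1)*sm^2 := by
    have h := hδ ▸ min_le_left ((μ - 1) * sm ^ 2 / (μ * sp ^ 2))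
      (mf / (c / 4 * sp ^ 2 + μ / c * Mf ^ 2 / sm ^ 2))
    exact (le_div_iff₀ (by positivity)).mp h
  have a5 : δ*(c^2*sm^2*sp^2/4 + μ*Mf^2) ≤ mf*(c*sm^2) := by
    have h := hδ ▸ min_le_right ((μ - 1) * sm ^ 2 / (μ * sp ^ 2))
      (mf / (c / 4 * sp ^ 2 + μ / c * Mf ^ 2 / sm ^ 2))
    have h' := (le_div_iff₀ hD).mp h
    have h'' := mul_le_mul_of_nonneg_right h' (by positivity : (0:ℝ) ≤ c*sm^2)
    calc δ*(c^2*sm^2*sp^2/4 + μ*Mf^2)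
        = δ * (c / 4 * sp ^ 2 + μ / c * Mf ^ 2 / sm ^ 2) * (c*sm^2) := by
          field_simp
      _ ≤ mf*(c*sm^2) := h''
  -- the key contraction estimate
  have hE : (0:ℝ) < (μ-1)*sm^2 := by positivity
  have GE : ((μ-1)*sm^2) * (δ*c^2*‖ze‖^2 + δ*‖βe‖^2) ≤
      ((μ-1)*sm^2) * (mf*c*‖xd‖^2 + c^2*‖zd‖^2) := by
    have q1 : ((μ-1)*sm^2*δ*c^2/4) * ((2*‖ze‖)^2) ≤
        ((μ-1)*sm^2*δ*c^2/4) * ((sp*‖xd‖)^2) := by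
      apply mul_le_mul_of_nonneg_left _ (by positivity)
      apply pow_le_pow_left₀ (by positivity) B1
    have q2 : δ * ((μ-1)*(sm*‖βe‖)^2) ≤
        δ * (μ*(c*sp*‖zd‖)^2 + (μ-1)*μ*(Mf*‖xd‖)^2) :=
      mul_le_mul_of_nonneg_left a3 hδpos.le
    have q3 : (δ*(μ*sp^2)) * (c^2*‖zd‖^2) ≤ ((μ-1)*sm^2) * (c^2*‖zd‖^2) :=
      mul_le_mul_of_nonneg_right a4 (by positivity)
    have q4 : ((μ-1)*‖xd‖^2) * (δ*(c^2*sm^2*sp^2/4 + μ*Mf^2)) ≤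
        ((μ-1)*‖xd‖^2) * (mf*(c*sm^2)) :=
      mul_le_mul_of_nonneg_left a5 (by positivity)
    linarith [q1, q2, q3, q4]
  have KEY : δ*c^2*‖ze‖^2 + δ*‖βe‖^2 ≤ mf*c*‖xd‖^2 + c^2*‖zd‖^2 :=
    (mul_le_mul_iff_right₀ hE).mp GE
  -- final: (1+δ)*(c²‖ze‖² + ‖βe‖²) ≤ c²‖z k - z*‖² + ‖β k - β*‖²
  have FIN : (1+δ)*(c^2*‖ze‖^2 + ‖βe‖^2) ≤ c^2*‖z k - zstar‖^2 + ‖β k - βstar‖^2 := by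
    nlinarith [D1, KEY, sq_nonneg ‖βd‖]
  have h1δ : (0:ℝ) < 1 + δ := by linarith
  rw [one_div (1+δ), inv_mul_eq_div, le_div_iff₀ h1δ, ← mul_le_mul_iff_right₀ hc]
  calc c * ((c * ‖ze‖ ^ 2 + 1 / c * ‖βe‖ ^ 2) * (1 + δ))
      = (1+δ) * (c^2*‖ze‖^2 + ‖βe‖^2) := by field_simp
    _ ≤ c^2*‖z k - zstar‖^2 + ‖β k - βstar‖^2 := FIN
    _ = c * (c * ‖z k - zstar‖ ^ 2 + 1 / c * ‖β k - βstar‖ ^ 2) := by field_simp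
end
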